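/- Let L > 0, let μ : ℝ → ℝ be continuous and 1-periodic, let ρ ∈ ℝ, and let Φ be a positive, L-periodic, C² solution of -(a_L(x) Φ')' - μ(x/L) Φ = ρ Φ on ℝ. Then ρ = -(1/L) ∫₀^L a(x/L) (Φ'(x)/Φ(x))² dx - ∫₀¹ μ(y) dy; in particular, ρ ≤ -∫₀¹ μ(y) dy. -/

import Mathlib

open MeasureTheory Filter Topology

/-- If `Φ` is a positive `L`-periodic `C²` solution of
`-(a_L Φ')' - μ(x/L) Φ = ρ Φ`, then
`ρ = -(1/L) ∫₀^L a(x/L) (Φ'/Φ)² - ∫₀¹ μ`; in particular `ρ ≤ -∫₀¹ μ`. -/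
theorem principal_eigenvalue_formula
    (a : ℝ → ℝ) (μ : ℝ → ℝ) (α₁ α₂ L ρ : ℝ) (Φ : ℝ → ℝ)
    (ha_C2 : ContDiff ℝ 2 a) (ha_per : ∀ x, a (x + 1) = a x)
    (hα₁ : 0 < α₁) (hα₁₂ : α₁ < α₂)
    (ha_lb : ∀ x, α₁ ≤ a x) (ha_ub : ∀ x, a x ≤ α₂)
    (hμ_cont : Continuous μ) (hμ_per : ∀ x, μ (x + 1) = μ x)
    (hL : 0 < L)
    (hΦ_C2 : ContDiff ℝ 2 Φ)
    (hΦ_pos : ∀ x, 0 < Φ x)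
    (hΦ_per : ∀ x, Φ (x + L) = Φ x)
    (hΦ_eq : ∀ x, -(deriv (fun y => a (y / L) * deriv Φ y) x) - μ (x / L) * Φ x
        = ρ * Φ x) :
    ρ = -(1 / L) * (∫ x in (0:ℝ)..L, a (x / L) * (deriv Φ x / Φ x) ^ 2)
        - (∫ y in (0:ℝ)..1, μ y) ∧
    ρ ≤ -(∫ y in (0:ℝ)..1, μ y) := by
  have hL0 : L ≠ 0 := hL.ne'
  have hΦne : ∀ x, Φ x ≠ 0 := fun x => (hΦ_pos x).ne'
  have hΦd : Differentiable ℝ Φ := hΦ_C2.differentiable (by norm_num)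
  have hΦ'd : Differentiable ℝ (deriv Φ) := by
    have : ContDiff ℝ (1+1) Φ := by norm_num [hΦ_C2]
    exact ((contDiff_succ_iff_deriv.mp this).2.2).differentiable (by norm_num)
  have hΦ'c : Continuous (deriv Φ) := hΦ'd.continuous
  have had : Differentiable ℝ a := ha_C2.differentiable (by norm_num)
  have haLd : Differentiable ℝ (fun x => a (x / L)) :=
    had.comp (differentiable_id.div_const L)
  -- deriv Φ is L-periodic
  have hΦ'per : ∀ x, deriv Φ (x + L) = deriv Φ x := by
    intro x
    have : deriv (fun y => Φ (y + L)) x = deriv Φ (x + L) := deriv_comp_add_const Φ L x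
    rw [← this]
    congr 1
    funext y; exact hΦ_per y
  -- the flux g and the logarithmic flux F
  set g : ℝ → ℝ := fun y => a (y / L) * deriv Φ y with hg
  have hgd : Differentiable ℝ g := haLd.mul hΦ'd
  have hg_deriv : ∀ x, deriv g x = -((ρ + μ (x / L)) * Φ x) := by
    intro x
    have := hΦ_eq x
    nlinarith [this]
  set F : ℝ → ℝ := fun x => g x / Φ x with hF
  have hFd : ∀ x, HasDerivAt F (-(ρ + μ (x / L)) - a (x / L) * (deriv Φ x / Φ x) ^ 2) x := by
    intro x
    have h1 : HasDerivAt g (deriv g x) x := (hgd x).hasDerivAt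
    have h2 : HasDerivAt Φ (deriv Φ x) x := (hΦd x).hasDerivAt
    have h3 := h1.div h2 (hΦne x)
    convert h3 using 1 <;> try rfl
    rw [hg_deriv x]
    have hx := hΦne x
    field_simp
    ring
  have hcont : Continuous (fun x => -(ρ + μ (x / L)) - a (x / L) * (deriv Φ x / Φ x) ^ 2) := by
    fun_prop (disch := intro x; exact hΦne x)
  -- FTC
  have hFTC : (∫ x in (0:ℝ)..L, (-(ρ + μ (x / L)) - a (x / L) * (deriv Φ x / Φ x) ^ 2))
      = F L - F 0 := by
    exact intervalIntegral.integral_eq_sub_of_hasDerivAt (fun x _ => hFd x)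
      (hcont.intervalIntegrable 0 L)
  have hFL : F L = F 0 := by
    simp only [hF, hg]
    have h1 : deriv Φ L = deriv Φ 0 := by simpa using hΦ'per 0
    have h2 : Φ L = Φ 0 := by simpa using hΦ_per 0
    have h3 : a (L / L) = a (0 / L) := by
      rw [div_self hL0]
      simp [← ha_per 0]
    rw [h1, h2, h3]
  rw [hFL, sub_self] at hFTC
  -- split the integral
  have hi1 : IntervalIntegrable (fun x => -(ρ + μ (x / L))) volume 0 L :=
    (by fun_prop : Continuous fun x => -(ρ + μ (x / L))).intervalIntegrable 0 L
  have hi2 : IntervalIntegrable (fun x => a (x / L) * (deriv Φ x / Φ x) ^ 2) volume 0 L :=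
    (by fun_prop (disch := intro x; exact hΦne x) :
      Continuous fun x => a (x / L) * (deriv Φ x / Φ x) ^ 2).intervalIntegrable 0 L
  rw [intervalIntegral.integral_sub hi1 hi2] at hFTC
  have hsplit : (∫ x in (0:ℝ)..L, -(ρ + μ (x / L)))
      = -(ρ * L) - ∫ x in (0:ℝ)..L, μ (x / L) := by
    have hiμ : IntervalIntegrable (fun x => μ (x / L)) volume 0 L :=
      (by fun_prop : Continuous fun x => μ (x / L)).intervalIntegrable 0 L
    have : (∫ x in (0:ℝ)..L, -(ρ + μ (x / L)))
        = -((∫ x in (0:ℝ)..L, (ρ:ℝ)) + ∫ x in (0:ℝ)..L, μ (x / L)) := by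
      rw [← intervalIntegral.integral_add (intervalIntegrable_const) hiμ,
        ← intervalIntegral.integral_neg]
    rw [this]
    simp [mul_comm]
    ring
  have hsub : (∫ x in (0:ℝ)..L, μ (x / L)) = L * ∫ y in (0:ℝ)..1, μ y := by
    rw [intervalIntegral.integral_comp_div μ hL0]
    simp [div_self hL0, smul_eq_mul]
  rw [hsplit, hsub] at hFTC
  have key : ρ = -(1 / L) * (∫ x in (0:ℝ)..L, a (x / L) * (deriv Φ x / Φ x) ^ 2)
      - (∫ y in (0:ℝ)..1, μ y) := by
    field_simp at hFTC ⊢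
    linarith
  refine ⟨key, ?_⟩
  have hnn : 0 ≤ ∫ x in (0:ℝ)..L, a (x / L) * (deriv Φ x / Φ x) ^ 2 := by
    apply intervalIntegral.integral_nonneg hL.le
    intro x _
    exact mul_nonneg (le_trans hα₁.le (ha_lb _)) (sq_nonneg _)
  rw [key]
  have : 0 ≤ (1 / L) * (∫ x in (0:ℝ)..L, a (x / L) * (deriv Φ x / Φ x) ^ 2) :=
    mul_nonneg (by positivity) hnn
  linarith
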